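/- For n ≥ 1 and real x with 0 ≤ x ≤ n, the n-dimensional Lebesgue measure of the set { y ∈ [0,1]^n : y_1 + ... + y_n ≤ x } equals (1/n!) · ∑_{k=0}^{⌊x⌋} (-1)^k · C(n,k) · (x-k)^n. -/

import Mathlib

open MeasureTheory Finset

lemma simplex_measurable (n : ℕ) (t : ℝ) :
    MeasurableSet {y : Fin n → ℝ | (∀ i, 0 ≤ y i) ∧ ∑ i, y i ≤ t} := by
  have : {y : Fin n → ℝ | (∀ i, 0 ≤ y i) ∧ ∑ i, y i ≤ t}
      = (⋂ i, {y : Fin n → ℝ | 0 ≤ y i}) ∩ {y | ∑ i, y i ≤ t} := by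
    ext y; simp [Set.mem_iInter]
  rw [this]
  exact (MeasurableSet.iInter fun i =>
      measurableSet_le measurable_const (measurable_pi_apply i)).inter
    (measurableSet_le (Finset.measurable_sum _ fun i _ => measurable_pi_apply i)
      measurable_const)

lemma simplex_volume (n : ℕ) (t : ℝ) :
    volume {y : Fin n → ℝ | (∀ i, 0 ≤ y i) ∧ ∑ i, y i ≤ t} =
      ENNReal.ofReal (if 0 ≤ t then t ^ n / n.factorial else 0) := by
  induction n generalizing t with
  | zero =>
      by_cases ht : 0 ≤ t
      · have : {y : Fin 0 → ℝ | (∀ i, 0 ≤ y i) ∧ ∑ i, y i ≤ t} = Set.univ := by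
          ext y; simp [ht]
        rw [this, if_pos ht]
        simp [volume_pi, Measure.pi_univ]
      · have : {y : Fin 0 → ℝ | (∀ i, 0 ≤ y i) ∧ ∑ i, y i ≤ t} = ∅ := by
          ext y; simp [ht]
        rw [this, if_neg ht]
        simp
  | succ n ih =>
      have hmp := (measurePreserving_piFinSuccAbove
          (fun _ : Fin (n + 1) => (volume : Measure ℝ)) 0).symm
      set e := MeasurableEquiv.piFinSuccAbove (fun _ : Fin (n + 1) => ℝ) 0 with he
      have hS := simplex_measurable (n + 1) t
      have hpre : e.symm ⁻¹' {y : Fin (n+1) → ℝ | (∀ i, 0 ≤ y i) ∧ ∑ i, y i ≤ t}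
          = {p : ℝ × (Fin n → ℝ) | 0 ≤ p.1 ∧ ((∀ i, 0 ≤ p.2 i) ∧ p.1 + ∑ i, p.2 i ≤ t)} := by
        ext ⟨a, z⟩
        simp only [Set.mem_preimage, Set.mem_setOf_eq, he,
          MeasurableEquiv.piFinSuccAbove_symm_apply, Fin.insertNthEquiv, Equiv.coe_fn_mk,
          Fin.insertNth_zero]
        rw [Fin.forall_fin_succ, Fin.sum_univ_succ]
        simp [Fin.cons_zero, Fin.cons_succ, Fin.zero_succAbove, and_assoc]
      have key : volume {y : Fin (n+1) → ℝ | (∀ i, 0 ≤ y i) ∧ ∑ i, y i ≤ t}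
          = ((volume : Measure ℝ).prod (volume : Measure (Fin n → ℝ)))
              {p : ℝ × (Fin n → ℝ) | 0 ≤ p.1 ∧ ((∀ i, 0 ≤ p.2 i) ∧ p.1 + ∑ i, p.2 i ≤ t)} := by
        rw [← hpre]
        have := hmp.measure_preimage hS.nullMeasurableSet
        rw [volume_pi]
        rw [← this]
        congr 1
      rw [key]
      have hmeas2 : MeasurableSet {p : ℝ × (Fin n → ℝ) |
          0 ≤ p.1 ∧ ((∀ i, 0 ≤ p.2 i) ∧ p.1 + ∑ i, p.2 i ≤ t)} := by
        rw [← hpre]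
        exact e.symm.measurable hS
      rw [Measure.prod_apply hmeas2]
      have hslice : ∀ a : ℝ, volume (Prod.mk a ⁻¹' {p : ℝ × (Fin n → ℝ) |
            0 ≤ p.1 ∧ ((∀ i, 0 ≤ p.2 i) ∧ p.1 + ∑ i, p.2 i ≤ t)})
          = ENNReal.ofReal (Set.indicator (Set.Icc 0 t)
              (fun a => (t - a) ^ n / n.factorial) a) := by
        intro a
        by_cases ha : 0 ≤ a
        · have : Prod.mk a ⁻¹' {p : ℝ × (Fin n → ℝ) |
              0 ≤ p.1 ∧ ((∀ i, 0 ≤ p.2 i) ∧ p.1 + ∑ i, p.2 i ≤ t)}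
              = {z : Fin n → ℝ | (∀ i, 0 ≤ z i) ∧ ∑ i, z i ≤ t - a} := by
            ext z
            simp only [Set.mem_preimage, Set.mem_setOf_eq, ha, true_and]
            constructor
            · rintro ⟨h1, h2⟩; exact ⟨h1, by linarith⟩
            · rintro ⟨h1, h2⟩; exact ⟨h1, by linarith⟩
          rw [this, ih]
          congr 1
          by_cases hat : a ≤ t
          · rw [if_pos (by linarith), Set.indicator_of_mem (Set.mem_Icc.2 ⟨ha, hat⟩)]
          · rw [if_neg (by linarith), Set.indicator_of_notMem (by simp [Set.mem_Icc, hat])]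
        · have : Prod.mk a ⁻¹' {p : ℝ × (Fin n → ℝ) |
              0 ≤ p.1 ∧ ((∀ i, 0 ≤ p.2 i) ∧ p.1 + ∑ i, p.2 i ≤ t)} = ∅ := by
            ext z; simp [ha]
          rw [this, Set.indicator_of_notMem (by simp [Set.mem_Icc, ha])]
          simp
      simp_rw [hslice]
      have hint : Integrable (Set.indicator (Set.Icc 0 t)
          (fun a => (t - a) ^ n / n.factorial)) volume := by
        rw [integrable_indicator_iff measurableSet_Icc]
        apply ContinuousOn.integrableOn_compact isCompact_Icc
        fun_prop
      rw [← ofReal_integral_eq_lintegral_ofReal hint]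
      · rw [integral_indicator measurableSet_Icc]
        by_cases ht : 0 ≤ t
        · rw [if_pos ht, MeasureTheory.integral_Icc_eq_integral_Ioc,
            ← intervalIntegral.integral_of_le ht]
          have : (∫ a in (0:ℝ)..t, (t - a) ^ n / n.factorial)
              = (∫ a in (0:ℝ)..t, (t - a) ^ n) / n.factorial := by
            rw [intervalIntegral.integral_div]
          rw [this, intervalIntegral.integral_comp_sub_left (fun s => s ^ n) t]
          simp only [sub_self, sub_zero]
          rw [integral_pow]
          rw [Nat.factorial_succ]
          push_cast
          field_simp
          rw [zero_pow (Nat.succ_ne_zero n), sub_zero]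
        · rw [if_neg ht, Set.Icc_eq_empty (by linarith)]
          simp
      · filter_upwards with a
        apply Set.indicator_nonneg
        intro s hs
        rw [Set.mem_Icc] at hs
        apply div_nonneg (pow_nonneg (by linarith [hs.2]) _) (by positivity)

section aux

lemma A_measurable (n : ℕ) (x : ℝ) (S : Finset (Fin n)) :
    MeasurableSet {y : Fin n → ℝ | (∀ i, 0 ≤ y i) ∧ (∀ i ∈ S, 1 < y i) ∧ ∑ i, y i ≤ x} := by
  have : {y : Fin n → ℝ | (∀ i, 0 ≤ y i) ∧ (∀ i ∈ S, 1 < y i) ∧ ∑ i, y i ≤ x}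
      = (⋂ i, {y : Fin n → ℝ | 0 ≤ y i}) ∩
        ((⋂ i ∈ S, {y : Fin n → ℝ | 1 < y i}) ∩ {y | ∑ i, y i ≤ x}) := by
    ext y; simp [Set.mem_iInter]
  rw [this]
  refine (MeasurableSet.iInter fun i =>
      measurableSet_le measurable_const (measurable_pi_apply i)).inter
    ((MeasurableSet.biInter (Set.to_countable _) fun i _ =>
      measurableSet_lt measurable_const (measurable_pi_apply i)).inter
      (measurableSet_le (Finset.measurable_sum _ fun i _ => measurable_pi_apply i)
        measurable_const))

lemma A_volume (n : ℕ) (x : ℝ) (S : Finset (Fin n)) :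
    volume {y : Fin n → ℝ | (∀ i, 0 ≤ y i) ∧ (∀ i ∈ S, 1 < y i) ∧ ∑ i, y i ≤ x} =
      ENNReal.ofReal (if 0 ≤ x - S.card then (x - S.card) ^ n / n.factorial else 0) := by
  classical
  set A := {y : Fin n → ℝ | (∀ i, 0 ≤ y i) ∧ (∀ i ∈ S, 1 < y i) ∧ ∑ i, y i ≤ x} with hA
  set B := {y : Fin n → ℝ | (∀ i, 0 ≤ y i) ∧ (∀ i ∈ S, 1 ≤ y i) ∧ ∑ i, y i ≤ x} with hB
  have hsub : A ⊆ B := fun y hy => ⟨hy.1, fun i hi => le_of_lt (hy.2.1 i hi), hy.2.2⟩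
  have hnull : volume (B \ A) = 0 := by
    have hsubU : B \ A ⊆ ⋃ i ∈ S, {y : Fin n → ℝ | y i = 1} := by
      rintro y ⟨hyB, hyA⟩
      have hne : ¬ (∀ i ∈ S, 1 < y i) := fun h => hyA ⟨hyB.1, h, hyB.2.2⟩
      push_neg at hne
      obtain ⟨i, hiS, hile⟩ := hne
      exact Set.mem_biUnion hiS (le_antisymm (hyB.2.1 i hiS) hile).symm
    refine measure_mono_null hsubU ?_
    refine (measure_biUnion_null_iff (Set.to_countable _)).2 fun i _ => ?_
    rw [volume_pi]
    exact Measure.pi_hyperplane _ i 1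
  have hAB : volume A = volume B := by
    refine le_antisymm (measure_mono hsub) ?_
    calc volume B ≤ volume (A ∪ (B \ A)) := measure_mono (by
            intro y hy
            by_cases h : y ∈ A
            · exact Or.inl h
            · exact Or.inr ⟨hy, h⟩)
      _ ≤ volume A + volume (B \ A) := measure_union_le _ _
      _ = volume A := by rw [hnull, add_zero]
  rw [hAB]
  set c : Fin n → ℝ := fun i => if i ∈ S then (-1 : ℝ) else 0 with hc
  have hcsum : ∑ i, c i = -(S.card : ℝ) := by
    rw [hc]
    rw [Finset.sum_ite_mem]
    simp
  have hBpre : B = (fun y => y + c) ⁻¹'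
      {z : Fin n → ℝ | (∀ i, 0 ≤ z i) ∧ ∑ i, z i ≤ x - S.card} := by
    ext y
    simp only [hB, Set.mem_preimage, Set.mem_setOf_eq, Pi.add_apply, Finset.sum_add_distrib,
      hcsum]
    constructor
    · rintro ⟨h1, h2, h3⟩
      refine ⟨fun i => ?_, by linarith⟩
      by_cases hi : i ∈ S
      · simp only [hc, if_pos hi]; linarith [h2 i hi]
      · simp only [hc, if_neg hi]; linarith [h1 i]
    · rintro ⟨h1, h2⟩
      refine ⟨fun i => ?_, fun i hi => ?_, by linarith⟩
      · by_cases hi : i ∈ S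
        · have := h1 i; simp only [hc, if_pos hi] at this; linarith
        · have := h1 i; simp only [hc, if_neg hi] at this; linarith
      · have := h1 i; simp only [hc, if_pos hi] at this; linarith
  rw [hBpre, measure_preimage_add_right, simplex_volume]

lemma indicator_expand (n : ℕ) (x : ℝ) (y : Fin n → ℝ) :
    Set.indicator {y : Fin n → ℝ | (∀ i, y i ∈ Set.Icc (0:ℝ) 1) ∧ ∑ i, y i ≤ x}
        (1 : (Fin n → ℝ) → ℝ) y
    = ∑ S ∈ (Finset.univ : Finset (Fin n)).powerset, (-1 : ℝ) ^ S.card *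
        Set.indicator {y : Fin n → ℝ | (∀ i, 0 ≤ y i) ∧ (∀ i ∈ S, 1 < y i) ∧ ∑ i, y i ≤ x}
          (1 : (Fin n → ℝ) → ℝ) y := by
  classical
  simp only [Set.indicator_apply, Set.mem_setOf_eq, Pi.one_apply]
  by_cases hx : ∑ i, y i ≤ x
  · simp only [hx, and_true]
    have h1 : (if ∀ i, y i ∈ Set.Icc (0:ℝ) 1 then (1:ℝ) else 0)
        = ∏ i, ((-(if 1 < y i then (1:ℝ) else 0)) + (if 0 ≤ y i then (1:ℝ) else 0)) := by
      have : ∀ i, (-(if 1 < y i then (1:ℝ) else 0)) + (if 0 ≤ y i then (1:ℝ) else 0)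
          = if y i ∈ Set.Icc (0:ℝ) 1 then 1 else 0 := by
        intro i
        by_cases h0 : 0 ≤ y i
        · by_cases h1 : 1 < y i
          · simp [h0, h1, Set.mem_Icc, not_le.2 h1]
          · simp [h0, h1, Set.mem_Icc, not_lt.1 h1]
        · have h1 : ¬ 1 < y i := by intro h; exact h0 (by linarith)
          simp [h0, h1, Set.mem_Icc]
      rw [Finset.prod_congr rfl fun i _ => this i, Finset.prod_boole]
      simp
    rw [h1, Finset.prod_add]
    refine Finset.sum_congr rfl fun S hS => ?_
    have hb : (∏ i ∈ S, (-(if 1 < y i then (1:ℝ) else 0)))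
        = (-1 : ℝ) ^ S.card * ∏ i ∈ S, (if 1 < y i then (1:ℝ) else 0) := by
      have : ∀ i ∈ S, (-(if 1 < y i then (1:ℝ) else 0))
          = (-1 : ℝ) * (if 1 < y i then (1:ℝ) else 0) := fun i _ => by ring
      rw [Finset.prod_congr rfl this, Finset.prod_mul_distrib, Finset.prod_const]
    rw [hb, Finset.prod_boole, Finset.prod_boole, mul_assoc]
    congr 1
    by_cases hP : ∀ i ∈ S, 1 < y i
    · by_cases hQ : ∀ i ∈ Finset.univ \ S, 0 ≤ y i
      · have hall : (∀ i, 0 ≤ y i) ∧ (∀ i ∈ S, 1 < y i) := by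
          refine ⟨fun i => ?_, hP⟩
          by_cases hi : i ∈ S
          · linarith [hP i hi]
          · exact hQ i (Finset.mem_sdiff.2 ⟨Finset.mem_univ i, hi⟩)
        rw [if_pos hP, if_pos hQ, if_pos hall, mul_one]
      · have : ¬ ((∀ i, 0 ≤ y i) ∧ (∀ i ∈ S, 1 < y i)) := by
          rintro ⟨h0, -⟩
          exact hQ fun i _ => h0 i
        rw [if_pos hP, if_neg hQ, if_neg this, mul_zero]
    · have : ¬ ((∀ i, 0 ≤ y i) ∧ (∀ i ∈ S, 1 < y i)) := fun h => hP h.2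
      rw [if_neg hP, if_neg this, zero_mul]
  · simp [hx]

end aux

/-- Irwin–Hall CDF: the measure of the sublevel set of the coordinate sum on the unit cube. -/
theorem irwin_hall_cdf (n : ℕ) (hn : 1 ≤ n) (x : ℝ) (hx0 : 0 ≤ x) (hxn : x ≤ n) :
    volume {y : Fin n → ℝ | (∀ i, y i ∈ Set.Icc (0 : ℝ) 1) ∧ ∑ i, y i ≤ x} =
      ENNReal.ofReal ((1 / (n.factorial : ℝ)) *
        ∑ k ∈ Finset.range (⌊x⌋₊ + 1),
          (-1 : ℝ) ^ k * (n.choose k : ℝ) * (x - (k : ℝ)) ^ n) := by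
  classical
  set T := {y : Fin n → ℝ | (∀ i, y i ∈ Set.Icc (0 : ℝ) 1) ∧ ∑ i, y i ≤ x} with hT
  set A : Finset (Fin n) → Set (Fin n → ℝ) := fun S =>
    {y : Fin n → ℝ | (∀ i, 0 ≤ y i) ∧ (∀ i ∈ S, 1 < y i) ∧ ∑ i, y i ≤ x} with hA
  have hTm : MeasurableSet T := by
    have : T = {y : Fin n → ℝ | (∀ i, 0 ≤ y i) ∧ (∀ i ∈ (∅ : Finset (Fin n)), 1 < y i)
        ∧ ∑ i, y i ≤ x} ∩ (⋂ i, {y : Fin n → ℝ | y i ≤ 1}) := by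
      ext y
      simp only [hT, Set.mem_setOf_eq, Set.mem_inter_iff, Set.mem_iInter, Set.mem_Icc,
        Finset.notMem_empty, false_implies, implies_true, true_and]
      constructor
      · rintro ⟨h1, h2⟩; exact ⟨⟨fun i => (h1 i).1, h2⟩, fun i => (h1 i).2⟩
      · rintro ⟨⟨h1, h2⟩, h3⟩; exact ⟨fun i => ⟨h1 i, h3 i⟩, h2⟩
    rw [this]
    exact (A_measurable n x ∅).inter (MeasurableSet.iInter fun i =>
      measurableSet_le (measurable_pi_apply i) measurable_const)
  have hAm : ∀ S, MeasurableSet (A S) := fun S => A_measurable n x S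
  have hAfin : ∀ S, volume (A S) ≠ ⊤ := fun S => by
    rw [hA, A_volume n x S]; exact ENNReal.ofReal_ne_top
  have hTfin : volume T ≠ ⊤ := by
    refine ne_top_of_le_ne_top (hAfin ∅) (measure_mono fun y hy => ?_)
    exact ⟨fun i => (hy.1 i).1, by simp, hy.2⟩
  have hInt : ∀ S : Finset (Fin n),
      Integrable ((A S).indicator (1 : (Fin n → ℝ) → ℝ)) volume := fun S => by
    rw [integrable_indicator_iff (hAm S)]
    exact integrableOn_const (hAfin S)
  have key : (volume T).toReal
      = ∑ S ∈ (Finset.univ : Finset (Fin n)).powerset,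
          (-1 : ℝ) ^ S.card * (volume (A S)).toReal := by
    rw [← measureReal_def, ← integral_indicator_one hTm]
    have hfe : (T.indicator (1 : (Fin n → ℝ) → ℝ))
        = fun y => ∑ S ∈ (Finset.univ : Finset (Fin n)).powerset,
            (-1 : ℝ) ^ S.card * (A S).indicator 1 y :=
      funext fun y => indicator_expand n x y
    rw [hfe, integral_finset_sum _ fun S _ => (hInt S).const_mul _]
    exact Finset.sum_congr rfl fun S _ => by
      rw [MeasureTheory.integral_const_mul, integral_indicator_one (hAm S), measureReal_def]
  have hAvolR : ∀ S : Finset (Fin n), (volume (A S)).toReal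
      = if 0 ≤ x - S.card then (x - S.card) ^ n / n.factorial else 0 := fun S => by
    rw [hA, A_volume n x S, ENNReal.toReal_ofReal]
    split_ifs with h
    · have := Nat.factorial_pos n
      positivity
    · exact le_rfl
  have key2 : (volume T).toReal = ∑ j ∈ Finset.range (n + 1), (n.choose j) •
      ((-1 : ℝ) ^ j * if 0 ≤ x - j then (x - j) ^ n / n.factorial else 0) := by
    rw [key]
    have : ∀ S ∈ (Finset.univ : Finset (Fin n)).powerset,
        (-1 : ℝ) ^ S.card * (volume (A S)).toReal
        = (fun j : ℕ => (-1 : ℝ) ^ j * if 0 ≤ x - j then (x - j) ^ n / n.factorial else 0)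
            S.card := fun S _ => by rw [hAvolR S]
    have hpc := Finset.sum_powerset_apply_card
      (fun j : ℕ => (-1 : ℝ) ^ j * if 0 ≤ x - j then (x - j) ^ n / n.factorial else 0)
      (x := (Finset.univ : Finset (Fin n)))
    rw [Finset.sum_congr rfl this, hpc]
    simp [Finset.card_univ]
  have hfloor : ⌊x⌋₊ + 1 ≤ n + 1 := by
    have : ⌊x⌋₊ ≤ ⌊(n : ℝ)⌋₊ := Nat.floor_le_floor hxn
    simpa using Nat.succ_le_succ this
  have key3 : (volume T).toReal = (1 / (n.factorial : ℝ)) *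
      ∑ k ∈ Finset.range (⌊x⌋₊ + 1), (-1 : ℝ) ^ k * (n.choose k : ℝ) * (x - k) ^ n := by
    rw [key2, ← Finset.sum_subset (Finset.range_subset_range.2 hfloor)]
    · rw [Finset.mul_sum]
      refine Finset.sum_congr rfl fun k hk => ?_
      have hkx : (k : ℝ) ≤ x := by
        have hk' : k ≤ ⌊x⌋₊ := Nat.lt_succ_iff.1 (Finset.mem_range.1 hk)
        calc (k : ℝ) ≤ (⌊x⌋₊ : ℝ) := by exact_mod_cast hk'
          _ ≤ x := Nat.floor_le hx0
      rw [if_pos (by linarith)]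
      rw [nsmul_eq_mul]
      have hfac : (n.factorial : ℝ) ≠ 0 := by
        exact_mod_cast (Nat.factorial_pos n).ne'
      field_simp
    · intro j hj hjn
      have : ⌊x⌋₊ + 1 ≤ j := by
        by_contra h
        exact hjn (Finset.mem_range.2 (by omega))
      have hxj : x < j := by
        calc x < ⌊x⌋₊ + 1 := Nat.lt_floor_add_one x
          _ ≤ j := by exact_mod_cast this
      rw [if_neg (by linarith), mul_zero, smul_zero]
  rw [← ENNReal.ofReal_toReal hTfin, key3]
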